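/- Let θ be a real number with sin θ ≠ 0, and let x, y be real numbers such that |x − y·cot θ| < π/(2√2) and |y/sin θ| < √(π/2). Then log( cos(y/sin θ) / cos(x − y·cot θ) ) = ∑_{k=1}^∞ [ L_k(1, (x − y·cot θ)²/(c_k² − (x − y·cot θ)²)) − M_k(1, (y/(c_k·sin θ))²) ], where the outer series converges. -/

import Mathlib

open Real Filter Finset Topology

private lemma prod_range_two_mul (f : ℕ → ℝ) (n : ℕ) :
    ∏ j ∈ Finset.range (2 * n), f j =
      (∏ k ∈ Finset.range n, f (2 * k)) * ∏ k ∈ Finset.range n, f (2 * k + 1) := by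
  induction n with
  | zero => simp
  | succ n ih =>
    have h2 : 2 * (n + 1) = (2 * n + 1) + 1 := by ring
    rw [h2, Finset.prod_range_succ, Finset.prod_range_succ, Finset.prod_range_succ,
      Finset.prod_range_succ, ih]
    ring

/-- Euler-type product for the cosine, as a limit of partial products. -/
private lemma tendsto_cos_prod {u : ℝ} (hu : |u| < π / 2) :
    Tendsto (fun n : ℕ => ∏ k ∈ Finset.range n, (1 - u ^ 2 / (((k : ℝ) + 1 / 2) * π) ^ 2))
      atTop (𝓝 (Real.cos u)) := by
  rcases eq_or_ne u 0 with rfl | hu0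
  · simpa using tendsto_const_nhds
  have hπ : (0 : ℝ) < π := Real.pi_pos
  have hsin : Real.sin u ≠ 0 := by
    rcases lt_or_gt_of_ne hu0 with h | h
    · have : Real.sin u < 0 := by
        apply Real.sin_neg_of_neg_of_neg_pi_lt h
        have := abs_lt.1 hu
        nlinarith [Real.pi_pos]
      linarith
    · have : 0 < Real.sin u := by
        apply Real.sin_pos_of_pos_of_lt_pi h
        have := abs_lt.1 hu
        nlinarith [Real.pi_pos]
      linarith
  set x := u / π with hx
  -- the two sine-product limits
  have hA : Tendsto (fun n : ℕ =>
      π * (2 * x) * ∏ j ∈ Finset.range (2 * n), (1 - (2 * x) ^ 2 / ((j : ℝ) + 1) ^ 2))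
      atTop (𝓝 (Real.sin (π * (2 * x)))) := by
    exact (Real.tendsto_euler_sin_prod (2 * x)).comp
      (tendsto_id.const_mul_atTop' (two_pos))
  have hB : Tendsto (fun n : ℕ =>
      π * x * ∏ j ∈ Finset.range n, (1 - x ^ 2 / ((j : ℝ) + 1) ^ 2))
      atTop (𝓝 (Real.sin (π * x))) := Real.tendsto_euler_sin_prod x
  have hπx : π * x = u := by rw [hx]; field_simp
  have hπ2x : π * (2 * x) = 2 * u := by rw [hx]; field_simp
  rw [show Real.sin (π * x) = Real.sin u from by rw [hπx]] at hB
  rw [show Real.sin (π * (2 * x)) = Real.sin (2 * u) from by rw [hπ2x]] at hA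
  -- each factor of B is nonzero
  have hxsq : x ^ 2 < 1 / 4 := by
    have h1 : |x| < 1 / 2 := by
      rw [hx, abs_div, abs_of_pos hπ]
      rw [div_lt_iff₀ hπ]
      calc |u| < π / 2 := hu
        _ = 1 / 2 * π := by ring
    calc x ^ 2 = |x| ^ 2 := (sq_abs x).symm
      _ < (1 / 2) ^ 2 := by nlinarith [abs_nonneg x]
      _ = 1 / 4 := by norm_num
  have hBfac : ∀ k : ℕ, (0 : ℝ) < 1 - x ^ 2 / ((k : ℝ) + 1) ^ 2 := by
    intro k
    have hk1 : (1 : ℝ) ≤ ((k : ℝ) + 1) ^ 2 := by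
      nlinarith [Nat.cast_nonneg (α := ℝ) k]
    have : x ^ 2 / ((k : ℝ) + 1) ^ 2 ≤ x ^ 2 := by
      apply div_le_of_le_mul₀ (by positivity) (by positivity)
      nlinarith [sq_nonneg x]
    nlinarith
  have hBne : ∀ n : ℕ, (π * x * ∏ j ∈ Finset.range n, (1 - x ^ 2 / ((j : ℝ) + 1) ^ 2)) ≠ 0 := by
    intro n
    apply mul_ne_zero
    · rw [hπx]; exact hu0
    · exact (Finset.prod_pos fun j _ => hBfac j).ne'
  -- key algebraic identity
  have key : ∀ n : ℕ,
      (∏ k ∈ Finset.range n, (1 - u ^ 2 / (((k : ℝ) + 1 / 2) * π) ^ 2)) =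
      (π * (2 * x) * ∏ j ∈ Finset.range (2 * n), (1 - (2 * x) ^ 2 / ((j : ℝ) + 1) ^ 2)) /
      (2 * (π * x * ∏ j ∈ Finset.range n, (1 - x ^ 2 / ((j : ℝ) + 1) ^ 2))) := by
    intro n
    rw [prod_range_two_mul (fun j => (1 - (2 * x) ^ 2 / ((j : ℝ) + 1) ^ 2)) n]
    have e1 : ∀ k : ℕ, (1 - (2 * x) ^ 2 / (((2 * k : ℕ) : ℝ) + 1) ^ 2)
        = 1 - u ^ 2 / (((k : ℝ) + 1 / 2) * π) ^ 2 := by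
      intro k
      have hk : (((2 * k : ℕ) : ℝ) + 1) = 2 * ((k : ℝ) + 1 / 2) := by push_cast; ring
      have hc : (((k : ℝ) + 1 / 2) * π) ≠ 0 := by positivity
      rw [hk, hx]
      field_simp
    have e2 : ∀ k : ℕ, (1 - (2 * x) ^ 2 / (((2 * k + 1 : ℕ) : ℝ) + 1) ^ 2)
        = 1 - x ^ 2 / ((k : ℝ) + 1) ^ 2 := by
      intro k
      have hk : (((2 * k + 1 : ℕ) : ℝ) + 1) = 2 * ((k : ℝ) + 1) := by push_cast; ring
      have hc : ((k : ℝ) + 1) ≠ 0 := by positivity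
      rw [hk]
      field_simp
    rw [Finset.prod_congr rfl (fun k _ => e1 k), Finset.prod_congr rfl (fun k _ => e2 k)]
    rw [eq_div_iff (by
      apply mul_ne_zero two_ne_zero (hBne n))]
    ring
  have hlim : Tendsto (fun n : ℕ =>
      (π * (2 * x) * ∏ j ∈ Finset.range (2 * n), (1 - (2 * x) ^ 2 / ((j : ℝ) + 1) ^ 2)) /
      (2 * (π * x * ∏ j ∈ Finset.range n, (1 - x ^ 2 / ((j : ℝ) + 1) ^ 2))))
      atTop (𝓝 (Real.sin (2 * u) / (2 * Real.sin u))) := by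
    have := hA.div (hB.const_mul 2) (by
      simp only [ne_eq, mul_eq_zero, not_or]
      exact ⟨two_ne_zero, hsin⟩)
    exact this.congr fun n => rfl
  have hcos : Real.sin (2 * u) / (2 * Real.sin u) = Real.cos u := by
    rw [Real.sin_two_mul]
    field_simp
  rw [hcos] at hlim
  exact hlim.congr (fun n => (key n).symm)

/-- Log-sum version of the cosine product. -/
private lemma hasSum_log_cos {u : ℝ} (hu : |u| < π / 2) :
    HasSum (fun k : ℕ => Real.log (1 - u ^ 2 / (((k : ℝ) + 1 / 2) * π) ^ 2))
      (Real.log (Real.cos u)) := by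
  have hπ : (0 : ℝ) < π := Real.pi_pos
  have hu2 : u ^ 2 < π ^ 2 / 4 := by
    have := sq_abs u
    nlinarith [abs_nonneg u, hu]
  have hc : ∀ k : ℕ, (π / 2) ≤ ((k : ℝ) + 1 / 2) * π := by
    intro k
    have : (1 / 2 : ℝ) ≤ (k : ℝ) + 1 / 2 := by
      nlinarith [Nat.cast_nonneg (α := ℝ) k]
    nlinarith
  have hc2 : ∀ k : ℕ, π ^ 2 / 4 ≤ (((k : ℝ) + 1 / 2) * π) ^ 2 := by
    intro k
    have h := hc k
    nlinarith [hπ]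
  set f := fun k : ℕ => Real.log (1 - u ^ 2 / (((k : ℝ) + 1 / 2) * π) ^ 2) with hf
  have htk : ∀ k : ℕ, u ^ 2 / (((k : ℝ) + 1 / 2) * π) ^ 2 ≤ u ^ 2 / (π ^ 2 / 4) := by
    intro k
    gcongr
    exact hc2 k
  have hδ : u ^ 2 / (π ^ 2 / 4) < 1 := by
    rw [div_lt_one (by positivity)]; linarith
  set δ := 1 - u ^ 2 / (π ^ 2 / 4) with hδdef
  have hδpos : 0 < δ := by simp [hδdef]; linarith
  have hfacpos : ∀ k : ℕ, δ ≤ 1 - u ^ 2 / (((k : ℝ) + 1 / 2) * π) ^ 2 := by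
    intro k
    have := htk k
    simp only [hδdef]
    linarith
  -- summability of f
  have hsummable : Summable f := by
    have hbound : ∀ k : ℕ, |f k| ≤ (u ^ 2 * 4 / π ^ 2 / δ) * (1 / ((k : ℝ) + 1) ^ 2) := by
      intro k
      have hfk : f k = Real.log (1 - u ^ 2 / (((k : ℝ) + 1 / 2) * π) ^ 2) := rfl
      set t := u ^ 2 / (((k : ℝ) + 1 / 2) * π) ^ 2 with ht
      have ht0 : 0 ≤ t := by positivity
      have htδ : δ ≤ 1 - t := hfacpos k
      have h1t : 0 < 1 - t := lt_of_lt_of_le hδpos htδ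
      have hlogle : Real.log (1 - t) ≤ 0 := Real.log_nonpos (by linarith) (by linarith)
      have hlogge : -(t / δ) ≤ Real.log (1 - t) := by
        have h2 : Real.log (1 - t)⁻¹ ≤ (1 - t)⁻¹ - 1 :=
          Real.log_le_sub_one_of_pos (by positivity)
        rw [Real.log_inv] at h2
        have h3 : (1 - t)⁻¹ - 1 = t / (1 - t) := by field_simp; ring
        have h4 : t / (1 - t) ≤ t / δ := by
          gcongr
        linarith
      have habs : |f k| ≤ t / δ := by
        rw [hfk, abs_le]
        constructor
        · linarith
        · linarith
      refine habs.trans ?_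
      have hkub : t ≤ u ^ 2 * 4 / π ^ 2 * (1 / ((k : ℝ) + 1) ^ 2) := by
        have hk12 : ((k : ℝ) + 1) / 2 ≤ (k : ℝ) + 1 / 2 := by
          nlinarith [Nat.cast_nonneg (α := ℝ) k]
        have hck : (((k : ℝ) + 1) / 2 * π) ^ 2 ≤ (((k : ℝ) + 1 / 2) * π) ^ 2 := by
          apply sq_le_sq'
          · nlinarith [Nat.cast_nonneg (α := ℝ) k, hπ]
          · nlinarith [Nat.cast_nonneg (α := ℝ) k, hπ]
        have h5 : t ≤ u ^ 2 / (((k : ℝ) + 1) / 2 * π) ^ 2 := by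
          rw [ht]
          gcongr
        have h6 : u ^ 2 / (((k : ℝ) + 1) / 2 * π) ^ 2
            = u ^ 2 * 4 / π ^ 2 * (1 / ((k : ℝ) + 1) ^ 2) := by
          have : ((k : ℝ) + 1) ≠ 0 := by positivity
          field_simp
          ring
        linarith [h5, h6.le]
      calc t / δ ≤ (u ^ 2 * 4 / π ^ 2 * (1 / ((k : ℝ) + 1) ^ 2)) / δ := by
            gcongr
        _ = (u ^ 2 * 4 / π ^ 2 / δ) * (1 / ((k : ℝ) + 1) ^ 2) := by ring
    have hsum2 : Summable (fun k : ℕ => (u ^ 2 * 4 / π ^ 2 / δ) * (1 / ((k : ℝ) + 1) ^ 2)) := by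
      apply Summable.mul_left
      have := (summable_nat_add_iff (f := fun n : ℕ => 1 / (n : ℝ) ^ 2) 1).2
        (summable_one_div_nat_pow.2 one_lt_two)
      simpa using this
    exact Summable.of_abs (hsum2.of_nonneg_of_le (fun k => abs_nonneg _)
      (fun k => hbound k))
  -- identify the sum
  have hcospos : 0 < Real.cos u :=
    Real.cos_pos_of_mem_Ioo ⟨by linarith [abs_lt.1 hu |>.1], abs_lt.1 hu |>.2⟩
  have hten : Tendsto (fun n : ℕ => ∑ k ∈ Finset.range n, f k) atTop
      (𝓝 (Real.log (Real.cos u))) := by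
    have heq : ∀ n : ℕ, ∑ k ∈ Finset.range n, f k =
        Real.log (∏ k ∈ Finset.range n, (1 - u ^ 2 / (((k : ℝ) + 1 / 2) * π) ^ 2)) := by
      intro n
      rw [Real.log_prod]
      intro k _
      exact (lt_of_lt_of_le hδpos (hfacpos k)).ne'
    simp only [heq]
    exact ((Real.continuousAt_log hcospos.ne').tendsto).comp (tendsto_cos_prod hu)
  have := hsummable.hasSum
  have h2 := this.tendsto_sum_nat
  have : ∑' k, f k = Real.log (Real.cos u) := tendsto_nhds_unique h2 hten
  exact this ▸ hsummable.hasSum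

/-- Dirichlet series decomposition for the twisted Euler–Ramanujan identity:
for `sin θ ≠ 0`, `|x - y cot θ| < π/(2√2)`, `|y / sin θ| < √(π/2)`,
`log (cos (y/sin θ) / cos (x - y cot θ))
  = ∑_{k=1}^∞ [L_k(1, (x - y cot θ)²/(c_k² - (x - y cot θ)²)) - M_k(1, (y/(c_k sin θ))²)]`
where `c_k = (k - 1/2)π`, `L_k(1,a) = ∑_{n=1}^∞ (-1)^{n+1} aⁿ/n`,
`M_k(1,b) = ∑_{n=1}^∞ bⁿ/n`.  The outer index `k : ℕ` corresponds to the
original `k + 1` and the inner index `n : ℕ` to the original `n + 1`. -/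
theorem twisted_euler_ramanujan_dirichlet (θ x y : ℝ) (hθ : Real.sin θ ≠ 0)
    (hx : |x - y * Real.cot θ| < Real.pi / (2 * Real.sqrt 2))
    (hy : |y / Real.sin θ| < Real.sqrt (Real.pi / 2)) :
    HasSum
      (fun k : ℕ =>
        (∑' n : ℕ, (-1 : ℝ) ^ n *
            ((x - y * Real.cot θ) ^ 2 /
              ((((k : ℝ) + 1 / 2) * Real.pi) ^ 2 - (x - y * Real.cot θ) ^ 2)) ^ (n + 1) /
            ((n : ℝ) + 1)) -
        (∑' n : ℕ,
            ((y / ((((k : ℝ) + 1 / 2) * Real.pi) * Real.sin θ)) ^ 2) ^ (n + 1) /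
            ((n : ℝ) + 1)))
      (Real.log (Real.cos (y / Real.sin θ) / Real.cos (x - y * Real.cot θ))) := by
  have hπ : (0 : ℝ) < π := Real.pi_pos
  set u := x - y * Real.cot θ with hu
  set v := y / Real.sin θ with hv
  clear_value u v
  -- basic bounds
  have hsqrt2 : (1 : ℝ) < Real.sqrt 2 := by
    rw [show (1:ℝ) = Real.sqrt 1 by simp]
    exact Real.sqrt_lt_sqrt (by norm_num) (by norm_num)
  have hu2 : u ^ 2 < π ^ 2 / 8 := by
    have h1 : |u| ^ 2 < (π / (2 * Real.sqrt 2)) ^ 2 := by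
      apply pow_lt_pow_left₀ hx (abs_nonneg u) two_ne_zero
    have h2 : (π / (2 * Real.sqrt 2)) ^ 2 = π ^ 2 / 8 := by
      rw [div_pow, mul_pow, Real.sq_sqrt (by norm_num : (0:ℝ) ≤ 2)]
      norm_num
    rw [sq_abs, h2] at h1
    exact h1
  have huabs : |u| < π / 2 := by
    apply lt_of_lt_of_le hx
    rw [div_le_div_iff₀ (by positivity) (by norm_num)]
    nlinarith [hπ, hsqrt2]
  have hv2 : v ^ 2 < π / 2 := by
    have h1 : |v| ^ 2 < (Real.sqrt (π / 2)) ^ 2 :=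
      pow_lt_pow_left₀ hy (abs_nonneg v) two_ne_zero
    rw [sq_abs, Real.sq_sqrt (by positivity : (0:ℝ) ≤ π / 2)] at h1
    exact h1
  have hvabs : |v| < π / 2 := by
    refine lt_trans hy ((Real.sqrt_lt' (by positivity)).2 ?_)
    nlinarith [Real.pi_gt_three]
  have hc : ∀ k : ℕ, π ^ 2 / 4 ≤ (((k : ℝ) + 1 / 2) * π) ^ 2 := by
    intro k
    have h0 : π / 2 ≤ ((k : ℝ) + 1 / 2) * π := by
      have : (1 / 2 : ℝ) ≤ (k : ℝ) + 1 / 2 := by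
        nlinarith [Nat.cast_nonneg (α := ℝ) k]
      nlinarith [hπ]
    nlinarith [hπ]
  have hcpos : ∀ k : ℕ, (0 : ℝ) < (((k : ℝ) + 1 / 2) * π) := by
    intro k; positivity
  have hcospos_u : 0 < Real.cos u :=
    Real.cos_pos_of_mem_Ioo ⟨by linarith [(abs_lt.1 huabs).1], (abs_lt.1 huabs).2⟩
  have hcospos_v : 0 < Real.cos v :=
    Real.cos_pos_of_mem_Ioo ⟨by linarith [(abs_lt.1 hvabs).1], (abs_lt.1 hvabs).2⟩
  -- pointwise evaluation of inner sums
  have hterm : ∀ k : ℕ,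
      (∑' n : ℕ, (-1 : ℝ) ^ n *
          (u ^ 2 / ((((k : ℝ) + 1 / 2) * π) ^ 2 - u ^ 2)) ^ (n + 1) / ((n : ℝ) + 1)) -
      (∑' n : ℕ, ((y / ((((k : ℝ) + 1 / 2) * π) * Real.sin θ)) ^ 2) ^ (n + 1) / ((n : ℝ) + 1))
      = Real.log (1 - v ^ 2 / (((k : ℝ) + 1 / 2) * π) ^ 2)
        - Real.log (1 - u ^ 2 / (((k : ℝ) + 1 / 2) * π) ^ 2) := by
    intro k
    set c := (((k : ℝ) + 1 / 2) * π) with hcdef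
    have hck := hc k
    have hckpos := hcpos k
    rw [← hcdef] at hck hckpos
    clear_value c
    have hcu : u ^ 2 < c ^ 2 - u ^ 2 := by
      have h8 : u ^ 2 < π ^ 2 / 8 := hu2
      linarith
    have hcu2 : (0 : ℝ) < c ^ 2 - u ^ 2 := by nlinarith [sq_nonneg u]
    -- first sum
    have ha : |u ^ 2 / (c ^ 2 - u ^ 2)| < 1 := by
      rw [abs_div, abs_of_nonneg (sq_nonneg u), abs_of_pos hcu2, div_lt_one hcu2]
      exact hcu
    have hna : |-(u ^ 2 / (c ^ 2 - u ^ 2))| < 1 := by rwa [abs_neg]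
    have h1 := (hasSum_pow_div_log_of_abs_lt_one hna).neg
    have h1' : HasSum (fun n : ℕ => (-1 : ℝ) ^ n * (u ^ 2 / (c ^ 2 - u ^ 2)) ^ (n + 1) / ((n : ℝ) + 1))
        (-Real.log (1 - u ^ 2 / c ^ 2)) := by
      have heq : ∀ n : ℕ, (-1 : ℝ) ^ n * (u ^ 2 / (c ^ 2 - u ^ 2)) ^ (n + 1) / ((n : ℝ) + 1)
          = -((-(u ^ 2 / (c ^ 2 - u ^ 2))) ^ (n + 1) / ((n : ℝ) + 1)) := by
        intro n
        rw [neg_pow]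
        rw [pow_succ]
        ring
      have hval : -(-Real.log (1 - -(u ^ 2 / (c ^ 2 - u ^ 2)))) = -Real.log (1 - u ^ 2 / c ^ 2) := by
        rw [neg_neg, sub_neg_eq_add]
        have heq2 : 1 + u ^ 2 / (c ^ 2 - u ^ 2) = (1 - u ^ 2 / c ^ 2)⁻¹ := by
          have hc0 : c ≠ 0 := hckpos.ne'
          have hrw : 1 - u ^ 2 / c ^ 2 = (c ^ 2 - u ^ 2) / c ^ 2 := by
            field_simp
          rw [hrw, inv_div, eq_div_iff hcu2.ne']
          field_simp
          ring
        rw [heq2, Real.log_inv]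
      rw [← hval]
      exact h1.congr_fun heq
    -- second sum
    have hbval : (y / (c * Real.sin θ)) ^ 2 = v ^ 2 / c ^ 2 := by
      rw [hv, div_pow, div_pow, mul_pow]
      field_simp
    have hb : |v ^ 2 / c ^ 2| < 1 := by
      rw [abs_of_nonneg (by positivity), div_lt_one (by positivity)]
      nlinarith [hv2, Real.pi_gt_three]
    have h2 := hasSum_pow_div_log_of_abs_lt_one hb
    have h2' : HasSum (fun n : ℕ => ((y / (c * Real.sin θ)) ^ 2) ^ (n + 1) / ((n : ℝ) + 1))
        (-Real.log (1 - v ^ 2 / c ^ 2)) := by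
      rw [hbval]; exact h2
    rw [h1'.tsum_eq, h2'.tsum_eq]
    ring
  -- conclude
  have hsum := (hasSum_log_cos hvabs).sub (hasSum_log_cos huabs)
  rw [Real.log_div hcospos_v.ne' hcospos_u.ne']
  exact hsum.congr_fun (fun k => hterm k)
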